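/- Let X be a Grassmannian frame for R^n at angle α, with core C(X). If X is not an orthonormal basis (equivalently α > 0), then for every x ∈ C(X), the set {y ∈ C(X) : y ≠ x, |⟨x,y⟩| = α} spans R^n, and consequently |C(X)| ≥ n+1. -/

import Mathlib

open scoped RealInnerProductSpace
abbrev E (n : ℕ) := EuclideanSpace ℝ (Fin n)
noncomputable def coh {n : ℕ} (X : Set (E n)) : ℝ :=
  sSup {r : ℝ | ∃ x ∈ X, ∃ y ∈ X, x ≠ y ∧ r = |⟪x, y⟫|}
def IsUnitSet {n : ℕ} (X : Set (E n)) : Prop := ∀ x ∈ X, ‖x‖ = 1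
def Isolated {n : ℕ} (X : Set (E n)) (x : E n) : Prop :=
  ∀ y ∈ X, y ≠ x → |⟪x, y⟫| < coh X
def Isolable {n : ℕ} (X : Set (E n)) (x : E n) : Prop :=
  ∀ ε > 0, ∃ x' : E n, ‖x'‖ = 1 ∧ ‖x - x'‖ < ε ∧ ∀ y ∈ X, y ≠ x → |⟪x', y⟫| < coh X
def Grassmannian {n : ℕ} (m : ℕ) (X : Set (E n)) : Prop :=
  IsUnitSet X ∧ X.Finite ∧ X.ncard = m ∧
    ∀ Y : Set (E n), IsUnitSet Y → Y.Finite → Y.ncard = m → coh X ≤ coh Y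
noncomputable def coreSeq {n : ℕ} (X : Set (E n)) : ℕ → Set (E n)
  | 0 => X
  | k + 1 => coreSeq X k \ {x ∈ coreSeq X k | Isolable (coreSeq X k) x}
noncomputable def core {n : ℕ} (X : Set (E n)) : Set (E n) := ⋂ k, coreSeq X (k + 1)

def cohSet {n : ℕ} (X : Set (E n)) : Set ℝ :=
  {r : ℝ | ∃ x ∈ X, ∃ y ∈ X, x ≠ y ∧ r = |⟪x, y⟫|}

lemma coh_eq {n : ℕ} (X : Set (E n)) : coh X = sSup (cohSet X) := rfl

lemma cohSet_finite {n : ℕ} {X : Set (E n)} (hX : X.Finite) : (cohSet X).Finite := by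
  have h : cohSet X ⊆ (fun p : E n × E n => |⟪p.1, p.2⟫|) '' (X ×ˢ X) := by
    rintro r ⟨x, hx, y, hy, hxy, rfl⟩; exact ⟨(x, y), ⟨hx, hy⟩, rfl⟩
  exact ((hX.prod hX).image _).subset h

lemma mem_cohSet {n : ℕ} {X : Set (E n)} {x y : E n} (hx : x ∈ X) (hy : y ∈ X)
    (hxy : x ≠ y) : |⟪x, y⟫| ∈ cohSet X := ⟨x, hx, y, hy, hxy, rfl⟩

lemma le_coh {n : ℕ} {X : Set (E n)} (hX : X.Finite) {x y : E n} (hx : x ∈ X) (hy : y ∈ X)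
    (hxy : x ≠ y) : |⟪x, y⟫| ≤ coh X :=
  le_csSup (cohSet_finite hX).bddAbove (mem_cohSet hx hy hxy)

lemma coh_nonneg {n : ℕ} {X : Set (E n)} (hX : X.Finite) : 0 ≤ coh X := by
  rcases (cohSet X).eq_empty_or_nonempty with h | ⟨r, hr⟩
  · rw [coh_eq, h, Real.sSup_empty]
  · obtain ⟨x, hx, y, hy, hxy, rfl⟩ := hr
    exact le_trans (abs_nonneg _) (le_coh hX hx hy hxy)

lemma coh_mono {n : ℕ} {X Y : Set (E n)} (hX : X.Finite) (hYX : Y ⊆ X) :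
    coh Y ≤ coh X := by
  rcases (cohSet Y).eq_empty_or_nonempty with h | hne
  · rw [coh_eq, h, Real.sSup_empty]; exact coh_nonneg hX
  · refine csSup_le_csSup (cohSet_finite hX).bddAbove hne ?_
    rintro r ⟨x, hx, y, hy, hxy, rfl⟩
    exact mem_cohSet (hYX hx) (hYX hy) hxy

lemma coh_mem {n : ℕ} {X : Set (E n)} (hX : X.Finite) (hne : (cohSet X).Nonempty) :
    coh X ∈ cohSet X :=
  hne.csSup_mem (cohSet_finite hX)

lemma cohSet_nonempty_of_pos {n : ℕ} {X : Set (E n)} (h : 0 < coh X) :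
    (cohSet X).Nonempty := by
  rcases (cohSet X).eq_empty_or_nonempty with he | hne
  · rw [coh_eq, he, Real.sSup_empty] at h; exact absurd h (lt_irrefl 0)
  · exact hne

lemma coh_le_one {n : ℕ} {X : Set (E n)} (hX : X.Finite) (hu : IsUnitSet X)
    (hpos : 0 < coh X) : coh X ≤ 1 := by
  refine csSup_le (cohSet_nonempty_of_pos hpos) ?_
  rintro r ⟨x, hx, y, hy, hxy, rfl⟩
  calc |⟪x, y⟫| ≤ ‖x‖ * ‖y‖ := abs_real_inner_le_norm x y
  _ = 1 := by rw [hu x hx, hu y hy, one_mul]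

lemma move_isolables {n m : ℕ} {α : ℝ} (hpos : 0 < α) (hα1 : α ≤ 1)
    (Y₀ : Set (E n)) {I : Set (E n)} (hIfin : I.Finite) :
    ∀ Y R : Set (E n), I ⊆ Y → Y ⊆ Y₀ →
    (∀ a ∈ I, ∀ ε > 0, ∃ a' : E n, ‖a'‖ = 1 ∧ ‖a - a'‖ < ε ∧
        ∀ y ∈ Y₀, y ≠ a → |⟪a', y⟫| < α) →
    Disjoint Y R → IsUnitSet (Y ∪ R) → (Y ∪ R).Finite → (Y ∪ R).ncard = m →
    (∀ r ∈ R, ∀ w ∈ Y ∪ R, w ≠ r → |⟪r, w⟫| < α) →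
    ∃ R' : Set (E n), Disjoint (Y \ I) R' ∧ IsUnitSet ((Y \ I) ∪ R') ∧
      ((Y \ I) ∪ R').Finite ∧ ((Y \ I) ∪ R').ncard = m ∧
      (∀ r ∈ R', ∀ w ∈ (Y \ I) ∪ R', w ≠ r → |⟪r, w⟫| < α) := by
  refine Set.Finite.induction_on I hIfin ?_ ?_
  · intro Y R _ _ _ hd hu hf hc hs
    rw [Set.diff_empty]; exact ⟨R, hd, hu, hf, hc, hs⟩
  · intro a I₀ haI₀ hI₀fin IH
    intro Y R hIY hYY₀ hiso hd hu hf hc hs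
    have haY : a ∈ Y := hIY (Set.mem_insert a I₀)
    have hRfin : R.Finite := hf.subset Set.subset_union_right
    -- margin against R
    set B : Set ℝ := (fun r => |⟪a, r⟫|) '' R with hB
    have hBfin : B.Finite := hRfin.image _
    set μ : ℝ := sSup B with hμdef
    have hμb : ∀ r ∈ R, |⟪a, r⟫| ≤ μ := fun r hr =>
      le_csSup hBfin.bddAbove ⟨r, hr, rfl⟩
    have haR : ∀ r ∈ R, a ≠ r := fun r hr => hd.ne_of_mem haY hr
    have hμα : μ < α := by
      rcases R.eq_empty_or_nonempty with hRe | ⟨r, hr⟩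
      · rw [hμdef, hB, hRe, Set.image_empty, Real.sSup_empty]; exact hpos
      · have hne : B.Nonempty := ⟨_, ⟨r, hr, rfl⟩⟩
        obtain ⟨r', hr', hr'e⟩ := hne.csSup_mem hBfin
        rw [hμdef, ← hr'e]
        show |⟪a, r'⟫| < α
        rw [real_inner_comm]
        exact hs r' hr' a (Set.mem_union_left _ haY) (haR r' hr')
    -- perturb a
    obtain ⟨a', ha'u, ha'n, ha'p⟩ := hiso a (Set.mem_insert a I₀) (α - μ) (by linarith)
    have key : ∀ w ∈ (Y \ {a}) ∪ R, |⟪a', w⟫| < α := by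
      rintro w (⟨hwY, hwa⟩ | hwR)
      · exact ha'p w (hYY₀ hwY) hwa
      · have h1 : |⟪a', w⟫ - ⟪a, w⟫| ≤ ‖a' - a‖ := by
          rw [← inner_sub_left]
          calc |⟪a' - a, w⟫| ≤ ‖a' - a‖ * ‖w‖ := abs_real_inner_le_norm _ _
          _ = ‖a' - a‖ := by rw [hu w (Set.mem_union_right _ hwR), mul_one]
        have h2 : ‖a' - a‖ < α - μ := by rwa [norm_sub_rev] at ha'n
        have := hμb w hwR
        calc |⟪a', w⟫| ≤ |⟪a, w⟫| + |⟪a', w⟫ - ⟪a, w⟫| := by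
              have := abs_add_le (⟪a, w⟫) (⟪a', w⟫ - ⟪a, w⟫); simpa using this
        _ < α := by linarith
    have ha'nm : a' ∉ (Y \ {a}) ∪ R := by
      intro hmem
      have := key a' hmem
      have h1 : ⟪a', a'⟫ = (1 : ℝ) := by
        rw [real_inner_self_eq_norm_sq, ha'u]; norm_num
      rw [h1] at this
      simp at this; linarith
    have hsetYR : (Y \ {a}) ∪ R = (Y ∪ R) \ {a} := by
      rw [Set.union_diff_distrib, Set.diff_singleton_eq_self (fun h => haR a h rfl)]
    have hm1 : 1 ≤ m := by
      have : (Y ∪ R).Nonempty := ⟨a, Set.mem_union_left _ haY⟩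
      have := Set.ncard_pos hf |>.mpr this
      omega
    refine ?_ -- apply IH
    have hres := IH (Y \ {a}) (insert a' R)
      (fun x hx => ⟨hIY (Set.mem_insert_of_mem a hx), fun he => haI₀ (he ▸ hx)⟩)
      ((Set.diff_subset).trans hYY₀)
      (fun b hb => hiso b (Set.mem_insert_of_mem a hb))
      (by
        rw [Set.insert_eq, Set.disjoint_union_right]
        refine ⟨Set.disjoint_singleton_right.mpr
          (fun h => ha'nm (Set.mem_union_left _ h)), hd.mono_left Set.diff_subset⟩)
      (by
        rintro x (hx | hx)
        · exact hu x (Set.mem_union_left _ hx.1)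
        · rcases hx with hx | hx
          · exact hx ▸ ha'u
          · exact hu x (Set.mem_union_right _ hx))
      (by
        rw [Set.union_insert]
        exact ((hf.subset (hsetYR ▸ Set.diff_subset)).insert a'))
      (by
        rw [Set.union_insert, Set.ncard_insert_of_notMem ha'nm
          (hf.subset (hsetYR ▸ Set.diff_subset)), hsetYR,
          Set.ncard_diff_singleton_of_mem (Set.mem_union_left _ haY), hc]
        omega)
      (by
        intro r hr w hw hwr
        rcases Set.mem_insert_iff.mp hr with hra | hrR
        · subst hra
          rcases hw with hw | hw
          · exact key w (Set.mem_union_left _ hw)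
          · rcases Set.mem_insert_iff.mp hw with hwa | hwR
            · exact absurd hwa hwr
            · exact key w (Set.mem_union_right _ hwR)
        · rcases hw with hw | hw
          · exact hs r hrR w (Set.mem_union_left _ hw.1) hwr
          · rcases Set.mem_insert_iff.mp hw with hwa | hwR
            · subst hwa
              have h := key r (Set.mem_union_right _ hrR)
              rwa [real_inner_comm] at h
            · exact hs r hrR w (Set.mem_union_right _ hwR) hwr)
    have hYI : (Y \ {a}) \ I₀ = Y \ insert a I₀ := by
      rw [Set.diff_diff, Set.singleton_union]
    rwa [hYI] at hres


lemma coreSeq_subset {n : ℕ} (X : Set (E n)) (k : ℕ) : coreSeq X k ⊆ X := by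
  induction k with
  | zero => exact subset_rfl
  | succ k ih => exact (Set.diff_subset).trans ih

lemma coreSeq_succ_subset {n : ℕ} (X : Set (E n)) (k : ℕ) :
    coreSeq X (k + 1) ⊆ coreSeq X k := Set.diff_subset

lemma coreSeq_invariant {n m : ℕ} {X : Set (E n)}
    (hXu : IsUnitSet X) (hXf : X.Finite) (hXc : X.ncard = m)
    (hXmin : ∀ Y : Set (E n), IsUnitSet Y → Y.Finite → Y.ncard = m → coh X ≤ coh Y)
    {α : ℝ} (hα : coh X = α) (hpos : 0 < α) (k : ℕ) :
    coh (coreSeq X k) = α ∧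
    ∃ R, Disjoint (coreSeq X k) R ∧ IsUnitSet (coreSeq X k ∪ R) ∧
      (coreSeq X k ∪ R).Finite ∧ (coreSeq X k ∪ R).ncard = m ∧
      (∀ r ∈ R, ∀ w ∈ coreSeq X k ∪ R, w ≠ r → |⟪r, w⟫| < α) := by
  have hα1 : α ≤ 1 := hα ▸ coh_le_one hXf hXu (hα ▸ hpos)
  have hm2 : 2 ≤ m := by
    obtain ⟨_, x, hx, y, hy, hxy, _⟩ := cohSet_nonempty_of_pos (hα ▸ hpos : 0 < coh X)
    have := Set.one_lt_ncard_iff hXf |>.mpr ⟨x, y, hx, hy, hxy⟩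
    omega
  induction k with
  | zero =>
    refine ⟨hα, ∅, ?_⟩
    simp only [Set.union_empty]
    exact ⟨Set.disjoint_empty _, hXu, hXf, hXc, by simp⟩
  | succ k ih =>
    obtain ⟨hcoh, R, hd, hu, hf, hc, hs⟩ := ih
    set Y := coreSeq X k with hY
    set I : Set (E n) := {x ∈ Y | Isolable Y x} with hI
    have hYf : Y.Finite := hXf.subset (coreSeq_subset X k)
    have hIY : I ⊆ Y := fun x hx => hx.1
    have hiso : ∀ a ∈ I, ∀ ε > 0, ∃ a' : E n, ‖a'‖ = 1 ∧ ‖a - a'‖ < ε ∧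
        ∀ y ∈ Y, y ≠ a → |⟪a', y⟫| < α := by
      intro a ha ε hε
      obtain ⟨a', h1, h2, h3⟩ := ha.2 ε hε
      exact ⟨a', h1, h2, fun y hy hya => hcoh ▸ h3 y hy hya⟩
    obtain ⟨R', hd', hu', hf', hc', hs'⟩ :=
      move_isolables hpos hα1 Y (hYf.subset hIY) Y R hIY subset_rfl hiso hd hu hf hc hs
    have hY1 : coreSeq X (k + 1) = Y \ I := rfl
    rw [hY1]
    -- coherence of W' := (Y \ I) ∪ R'
    have hWge : α ≤ coh (Y \ I ∪ R') := hα ▸ hXmin _ hu' hf' hc'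
    have hWne : (cohSet (Y \ I ∪ R')).Nonempty := by
      obtain ⟨x, y, hx, hy, hxy⟩ := Set.one_lt_ncard_iff hf' |>.mp (by omega)
      exact ⟨_, mem_cohSet hx hy hxy⟩
    have hWle : coh (Y \ I ∪ R') ≤ α := by
      refine csSup_le hWne ?_
      rintro r ⟨x, hx, y, hy, hxy, rfl⟩
      rcases hx with hx | hx
      · rcases hy with hy | hy
        · exact le_trans (le_coh (hf'.subset Set.subset_union_left) hx hy hxy)
            (le_trans (coh_mono hYf Set.diff_subset) (le_of_eq hcoh))
        · rw [real_inner_comm]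
          exact le_of_lt (hs' y hy x (Set.mem_union_left _ hx) hxy)
      · exact le_of_lt (hs' x hx y hy hxy.symm)
    have hWeq : coh (Y \ I ∪ R') = α := le_antisymm hWle hWge
    have hmem := hWne.csSup_mem (cohSet_finite hf')
    rw [← coh_eq, hWeq] at hmem
    obtain ⟨x, hx, y, hy, hxy, hxyα⟩ := hmem
    have hxY : x ∈ Y \ I := by
      rcases hx with hx | hx
      · exact hx
      · exact absurd hxyα.symm (ne_of_lt (hs' x hx y hy hxy.symm))
    have hyY : y ∈ Y \ I := by
      rcases hy with hy | hy
      · exact hy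
      · refine absurd hxyα.symm (ne_of_lt ?_)
        rw [real_inner_comm]
        exact hs' y hy x hx (hxy)
    have hcoh' : coh (Y \ I) = α := by
      refine le_antisymm (le_trans (coh_mono hYf Set.diff_subset) (le_of_eq hcoh)) ?_
      rw [hxyα]
      exact le_coh (hYf.subset Set.diff_subset) hxY hyY hxy
    exact ⟨hcoh', R', hd', hu', hf', hc', hs'⟩

lemma core_eq_coreSeq {n : ℕ} {X : Set (E n)} (hXf : X.Finite) :
    ∃ K, (⋂ k, coreSeq X (k + 1)) = coreSeq X K ∧
      coreSeq X (K + 1) = coreSeq X K := by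
  have hanti : ∀ i j, i ≤ j → coreSeq X j ⊆ coreSeq X i := by
    intro i j hij
    induction j with
    | zero =>
      have : i = 0 := by omega
      subst this; exact subset_rfl
    | succ j ih =>
      rcases Nat.lt_or_ge i (j + 1) with h | h
      · exact (coreSeq_succ_subset X j).trans (ih (by omega))
      · have : i = j + 1 := by omega
        subst this; exact subset_rfl
  have hfin : ∀ k, (coreSeq X k).Finite := fun k => hXf.subset (coreSeq_subset X k)
  have hstab : ∃ K, coreSeq X (K + 1) = coreSeq X K := by
    by_contra h
    push_neg at h
    have hdec : ∀ k, (coreSeq X (k + 1)).ncard < (coreSeq X k).ncard := fun k =>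
      Set.ncard_lt_ncard (ssubset_of_subset_of_ne (coreSeq_succ_subset X k) (h k)) (hfin k)
    have hle : ∀ k, (coreSeq X k).ncard + k ≤ (coreSeq X 0).ncard := by
      intro k
      induction k with
      | zero => simp
      | succ k ih => have := hdec k; omega
    have := hle ((coreSeq X 0).ncard + 1); omega
  obtain ⟨K, hK⟩ := hstab
  have hconst : ∀ j, K ≤ j → coreSeq X j = coreSeq X K := by
    intro j hj
    induction j with
    | zero =>
      have : K = 0 := by omega
      rw [this]
    | succ j ih =>
      rcases Nat.lt_or_ge K (j + 1) with h | h
      · have hj' := ih (by omega)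
        show coreSeq X j \ {x ∈ coreSeq X j | Isolable (coreSeq X j) x} = coreSeq X K
        rw [hj']
        exact hK
      · have : K = j + 1 := by omega
        rw [this]
  refine ⟨K, ?_, hK⟩
  apply Set.eq_of_subset_of_subset
  · exact le_trans (Set.iInter_subset _ K) (le_of_eq hK)
  · intro x hx
    refine Set.mem_iInter.mpr fun k => ?_
    rcases Nat.lt_or_ge k K with h | h
    · exact hanti (k + 1) K (by omega) hx
    · rw [hconst (k + 1) (by omega)]; exact hx

lemma contact_span {n : ℕ} {C : Set (E n)} (hfin : C.Finite) (hunit : IsUnitSet C)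
    {α : ℝ} (hpos : 0 < α) (hcoh : coh C = α)
    {x : E n} (hx : x ∈ C) (hnoiso : ¬ Isolable C x) :
    Submodule.span ℝ {y | y ∈ C ∧ y ≠ x ∧ |⟪x, y⟫| = α} = ⊤ := by
  by_contra hS
  set S : Set (E n) := {y | y ∈ C ∧ y ≠ x ∧ |⟪x, y⟫| = α} with hSdef
  set V := Submodule.span ℝ S with hVdef
  have hVbot : Vᗮ ≠ ⊥ := fun h => hS (Submodule.orthogonal_eq_bot_iff.mp h)
  obtain ⟨w₀, hw₀V, hw₀⟩ := Submodule.exists_mem_ne_zero_of_ne_bot hVbot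
  set w₁ : E n := ‖w₀‖⁻¹ • w₀ with hw₁def
  have hw₁n : ‖w₁‖ = 1 := norm_smul_inv_norm hw₀
  have hw₁V : w₁ ∈ Vᗮ := Submodule.smul_mem _ _ hw₀V
  set w : E n := if 0 ≤ ⟪x, w₁⟫ then w₁ else -w₁ with hwdef
  have hwn : ‖w‖ = 1 := by
    rw [hwdef]; split
    · exact hw₁n
    · rw [norm_neg]; exact hw₁n
  have hwV : w ∈ Vᗮ := by
    rw [hwdef]; split
    · exact hw₁V
    · exact Submodule.neg_mem _ hw₁V
  have hxw : 0 ≤ ⟪x, w⟫ := by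
    rw [hwdef]; split
    · assumption
    · rw [inner_neg_right]; linarith [lt_of_not_ge (by assumption : ¬ 0 ≤ ⟪x, w₁⟫)]
  have horth : ∀ y ∈ S, ⟪w, y⟫ = 0 := by
    intro y hy
    have := (Submodule.mem_orthogonal V w).mp hwV y (Submodule.subset_span hy)
    rwa [real_inner_comm] at this
  -- margin for non-contact vectors
  set B : Set ℝ := (fun y => |⟪x, y⟫|) '' (C \ insert x S) with hBdef
  have hBfin : B.Finite := (hfin.subset Set.diff_subset).image _
  set μ : ℝ := sSup B with hμdef
  have hμb : ∀ y ∈ C, y ≠ x → y ∉ S → |⟪x, y⟫| ≤ μ := by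
    intro y hy hyx hyS
    refine le_csSup hBfin.bddAbove ⟨y, ⟨hy, ?_⟩, rfl⟩
    intro h
    rcases Set.mem_insert_iff.mp h with h | h
    · exact hyx h
    · exact hyS h
  have hμα : μ < α := by
    rcases (C \ insert x S).eq_empty_or_nonempty with he | ⟨y, hy⟩
    · rw [hμdef, hBdef, he, Set.image_empty, Real.sSup_empty]; exact hpos
    · have hBne : B.Nonempty := ⟨_, y, hy, rfl⟩
      obtain ⟨y', hy', hy'e⟩ := hBne.csSup_mem hBfin
      rw [hμdef, ← hy'e]
      obtain ⟨hy'C, hy'ni⟩ := hy'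
      have hy'x : y' ≠ x := fun h => hy'ni (h ▸ Set.mem_insert x S)
      have hy'S : y' ∉ S := fun h => hy'ni (Set.mem_insert_of_mem x h)
      have hle : |⟪x, y'⟫| ≤ α := hcoh ▸ le_coh hfin hx hy'C (Ne.symm hy'x)
      refine lt_of_le_of_ne hle (fun h => hy'S ⟨hy'C, hy'x, h⟩)
  -- show x is isolable, contradiction
  refine hnoiso fun ε hε => ?_
  set t : ℝ := min (ε / 3) ((α - μ) / 2) with htdef
  have ht0 : 0 < t := lt_min (by linarith) (by linarith)
  have htε : t ≤ ε / 3 := min_le_left _ _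
  have htμ : t ≤ (α - μ) / 2 := min_le_right _ _
  set u : E n := x + t • w with hudef
  have hxn : ‖x‖ = 1 := hunit x hx
  have hN2 : ‖u‖ ^ 2 = 1 + 2 * t * ⟪x, w⟫ + t ^ 2 := by
    rw [hudef, norm_add_sq_real, hxn, real_inner_smul_right, norm_smul, hwn,
      Real.norm_eq_abs, mul_one, sq_abs]
    ring
  have hN1 : 1 < ‖u‖ := by
    nlinarith [norm_nonneg u, sq_nonneg t, mul_nonneg (by linarith : (0:ℝ) ≤ 2 * t) hxw]
  set N : ℝ := ‖u‖ with hNdef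
  have hN0 : 0 < N := by linarith
  set x' : E n := N⁻¹ • u with hx'def
  have hinv1 : N⁻¹ < 1 := inv_lt_one_of_one_lt₀ hN1
  have hinv0 : 0 < N⁻¹ := inv_pos.mpr hN0
  have hx'n : ‖x'‖ = 1 := by
    rw [hx'def, norm_smul, Real.norm_eq_abs, abs_of_pos hinv0, ← hNdef,
      inv_mul_cancel₀ (ne_of_gt hN0)]
  have hNle : N ≤ 1 + t := by
    rw [hNdef, hudef]
    calc ‖x + t • w‖ ≤ ‖x‖ + ‖t • w‖ := norm_add_le _ _
    _ = 1 + t := by rw [hxn, norm_smul, hwn, Real.norm_eq_abs, abs_of_pos ht0, mul_one]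
  have hdist : ‖x - x'‖ < ε := by
    have hxx' : x - x' = (-t) • w + (1 - N⁻¹) • u := by
      rw [hx'def, hudef]; module
    have h1 : ‖x - x'‖ ≤ t + (N - 1) := by
      rw [hxx']
      calc ‖(-t) • w + (1 - N⁻¹) • u‖ ≤ ‖(-t) • w‖ + ‖(1 - N⁻¹) • u‖ := norm_add_le _ _
      _ = t + (N - 1) := by
          rw [norm_smul, norm_smul, hwn, Real.norm_eq_abs, Real.norm_eq_abs,
            abs_neg, abs_of_pos ht0, abs_of_nonneg (by linarith : (0:ℝ) ≤ 1 - N⁻¹),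
            ← hNdef, mul_one, sub_mul, one_mul, inv_mul_cancel₀ (ne_of_gt hN0)]
    linarith
  refine ⟨x', hx'n, hdist, fun y hy hyx => ?_⟩
  rw [hcoh]
  have hinner : ⟪x', y⟫ = N⁻¹ * (⟪x, y⟫ + t * ⟪w, y⟫) := by
    rw [hx'def, hudef, real_inner_smul_left, inner_add_left, real_inner_smul_left]
  by_cases hyS : y ∈ S
  · have h0 : ⟪w, y⟫ = 0 := horth y hyS
    have hαy : |⟪x, y⟫| = α := hyS.2.2
    rw [hinner, h0, mul_zero, add_zero, abs_mul, abs_of_pos hinv0, hαy]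
    calc N⁻¹ * α < 1 * α := mul_lt_mul_of_pos_right hinv1 hpos
    _ = α := one_mul α
  · have hyT : |⟪x, y⟫| ≤ μ := hμb y hy hyx hyS
    have hwy : |⟪w, y⟫| ≤ 1 := by
      calc |⟪w, y⟫| ≤ ‖w‖ * ‖y‖ := abs_real_inner_le_norm _ _
      _ = 1 := by rw [hwn, hunit y hy, one_mul]
    calc |⟪x', y⟫| = N⁻¹ * |⟪x, y⟫ + t * ⟪w, y⟫| := by
          rw [hinner, abs_mul, abs_of_pos hinv0]
    _ ≤ 1 * (μ + t) := by
        refine mul_le_mul (le_of_lt hinv1) ?_ (abs_nonneg _) zero_le_one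
        calc |⟪x, y⟫ + t * ⟪w, y⟫| ≤ |⟪x, y⟫| + |t * ⟪w, y⟫| := abs_add_le _ _
        _ ≤ μ + t := by
            rw [abs_mul, abs_of_pos ht0]
            nlinarith
    _ < α := by rw [one_mul]; linarith


theorem core_spanning {n m : ℕ} (X : Set (E n))
    (hX : Grassmannian m X) (α : ℝ) (hα : coh X = α) (hpos : 0 < α) :
    (∀ x ∈ core X,
      Submodule.span ℝ {y | y ∈ core X ∧ y ≠ x ∧ |⟪x, y⟫| = α} = ⊤) ∧
    n + 1 ≤ (core X).ncard := by
  obtain ⟨hXu, hXf, hXc, hXmin⟩ := hX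
  have hinv := coreSeq_invariant hXu hXf hXc hXmin hα hpos
  obtain ⟨K, hKeq, hKstab⟩ := core_eq_coreSeq (X := X) hXf
  have hcore : core X = coreSeq X K := hKeq
  obtain ⟨hcohK, -⟩ := hinv K
  have hCf : (coreSeq X K).Finite := hXf.subset (coreSeq_subset X K)
  have hCu : IsUnitSet (coreSeq X K) := fun x hx => hXu x (coreSeq_subset X K hx)
  have hnoiso : ∀ x ∈ coreSeq X K, ¬ Isolable (coreSeq X K) x := by
    intro x hx hiso
    have hx1 : x ∈ coreSeq X (K + 1) := hKstab.symm ▸ hx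
    exact hx1.2 ⟨hx, hiso⟩
  have hspan : ∀ x ∈ core X,
      Submodule.span ℝ {y | y ∈ core X ∧ y ≠ x ∧ |⟪x, y⟫| = α} = ⊤ := by
    intro x hx
    rw [hcore] at hx ⊢
    exact contact_span hCf hCu hpos hcohK hx (hnoiso x hx)
  refine ⟨hspan, ?_⟩
  obtain ⟨-, a, ha, -, -, -, -⟩ :=
    cohSet_nonempty_of_pos (show 0 < coh (coreSeq X K) by rw [hcohK]; exact hpos)
  have haC : a ∈ core X := hcore ▸ ha
  set S : Set (E n) := {y | y ∈ core X ∧ y ≠ a ∧ |⟪a, y⟫| = α} with hSdef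
  have hSfin : S.Finite := (hcore ▸ hCf).subset (fun y hy => hy.1)
  have hsp : Submodule.span ℝ S = ⊤ := hspan a haC
  have hnle : n ≤ S.ncard := by
    classical
    set s : Finset (E n) := hSfin.toFinset with hsdef
    have hcoe : (↑s : Set (E n)) = S := hSfin.coe_toFinset
    have h1 : Submodule.span ℝ (↑s : Set (E n)) = ⊤ := by rw [hcoe]; exact hsp
    have h2 : Set.finrank ℝ (↑s : Set (E n)) ≤ s.card := finrank_span_finset_le_card s
    rw [Set.finrank, h1, finrank_top, finrank_euclideanSpace_fin] at h2
    rwa [Set.ncard_eq_toFinset_card S hSfin]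
  have hanot : a ∉ S := fun h => h.2.1 rfl
  have hins : insert a S ⊆ core X := by
    rintro y (rfl | hy)
    · exact haC
    · exact hy.1
  have hle := Set.ncard_le_ncard hins (hcore ▸ hCf)
  rw [Set.ncard_insert_of_notMem hanot hSfin] at hle
  omega
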